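/- arXiv:1311.4914 — 6 statements merged into one kernel-verified Lean document; each statement's English description precedes it below -/
import Mathlib

section
/- Let A,B,C₁,C₂ ∈ SL(2,ℂ) with [A,B]·C₁·C₂ = Id and with C₁ and C₂ each conjugate in SL(2,ℂ) to J₊. Suppose P ∈ SL(2,ℂ), P ≠ Id and P ≠ −Id, commutes with each of A, B, C₁, C₂. Then [A,B] = Id and C₁ = C₂⁻¹; moreover, for any Q ∈ SL(2,ℂ) with C₂ = Q·J₊·Q⁻¹, one has P ∈ Q·(U ∪ (−U))·Q⁻¹ and A, B ∈ Q·(U ∪ (−U))·Q⁻¹. -/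
open Matrix
open scoped commutatorElement

abbrev SL2C := Matrix.SpecialLinearGroup (Fin 2) ℂ

instance : Fact (Even (Fintype.card (Fin 2))) := ⟨by decide⟩

def Jp : SL2C := ⟨!![1, 1; 0, 1], by norm_num [Matrix.det_fin_two_of]⟩

/-- The unipotent subgroup `U` of upper triangular matrices with 1's on the diagonal. -/
def Uset : Set SL2C := {V | ∃ y : ℂ, (V : Matrix (Fin 2) (Fin 2) ℂ) = !![1, y; 0, 1]}

/-- `−U = {−V : V ∈ U}`. -/
def negUset : Set SL2C := (fun V => -V) '' Uset

def PMform (X : SL2C) : Prop :=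
  ∃ ε y : ℂ, (ε = 1 ∨ ε = -1) ∧ (X : Matrix (Fin 2) (Fin 2) ℂ) = ε • !![1, y; 0, 1]

lemma form_of_entries (X : SL2C) (hc : (X : Matrix (Fin 2) (Fin 2) ℂ) 1 0 = 0)
    (hd : (X : Matrix (Fin 2) (Fin 2) ℂ) 0 0 = (X : Matrix (Fin 2) (Fin 2) ℂ) 1 1) :
    PMform X := by
  have hdet : det (X : Matrix (Fin 2) (Fin 2) ℂ) = 1 := X.2
  rw [Matrix.det_fin_two] at hdet
  rw [hc, hd] at hdet
  have ha : (X : Matrix (Fin 2) (Fin 2) ℂ) 1 1 = 1 ∨ (X : Matrix (Fin 2) (Fin 2) ℂ) 1 1 = -1 := by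
    have := mul_self_eq_one_iff.mp (by linear_combination hdet)
    exact this
  refine ⟨(X : Matrix (Fin 2) (Fin 2) ℂ) 1 1, (X : Matrix (Fin 2) (Fin 2) ℂ) 1 1 * (X : Matrix (Fin 2) (Fin 2) ℂ) 0 1, ha, ?_⟩
  have hsq : (X : Matrix (Fin 2) (Fin 2) ℂ) 1 1 * (X : Matrix (Fin 2) (Fin 2) ℂ) 1 1 = 1 := by
    rcases ha with h | h <;> rw [h] <;> ring
  ext i j
  fin_cases i <;> fin_cases j <;> simp [Matrix.smul_apply]
  · exact hd
  · linear_combination -((X : Matrix (Fin 2) (Fin 2) ℂ) 0 1) * hsq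
  · exact hc

lemma form_mem (X : SL2C) (hX : PMform X) : X ∈ Uset ∪ negUset := by
  obtain ⟨ε, y, hε, hx⟩ := hX
  rcases hε with rfl | rfl
  · left
    exact ⟨y, by simpa using hx⟩
  · right
    refine ⟨⟨!![1, y; 0, 1], by norm_num [Matrix.det_fin_two_of]⟩, ⟨y, rfl⟩, ?_⟩
    ext i j
    have := congrFun (congrFun hx i) j
    change (-!![1, y; 0, 1] : Matrix (Fin 2) (Fin 2) ℂ) i j = _
    fin_cases i <;> fin_cases j <;> simp_all

lemma form_comm (X Y : SL2C) (hX : PMform X) (hY : PMform Y) : X * Y = Y * X := by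
  obtain ⟨ε, y, hε, hx⟩ := hX
  obtain ⟨δ, z, hδ, hy⟩ := hY
  ext i j
  fin_cases i <;> fin_cases j <;>
    simp [Matrix.mul_apply, Fin.sum_univ_two, hx, hy] <;> ring

lemma form_of_comm_Jp (X : SL2C) (h : X * Jp = Jp * X) : PMform X := by
  have h' : (X : Matrix (Fin 2) (Fin 2) ℂ) * (Jp : Matrix (Fin 2) (Fin 2) ℂ)
      = (Jp : Matrix (Fin 2) (Fin 2) ℂ) * (X : Matrix (Fin 2) (Fin 2) ℂ) := by
    exact_mod_cast congrArg (fun M : SL2C => (M : Matrix (Fin 2) (Fin 2) ℂ)) h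
  have h00 := congrFun (congrFun h' 0) 0
  have h01 := congrFun (congrFun h' 0) 1
  simp [Matrix.mul_apply, Fin.sum_univ_two, Jp] at h00 h01
  exact form_of_entries X (by linear_combination h00) (by linear_combination h01)

lemma form_of_comm (N X : SL2C) (hN : PMform N) (hN1 : N ≠ 1) (hN2 : N ≠ -1)
    (h : X * N = N * X) : PMform X := by
  obtain ⟨ε, y, hε, hn⟩ := hN
  have hε0 : ε ≠ 0 := by rcases hε with rfl | rfl <;> norm_num
  have hy : y ≠ 0 := by
    rintro rfl
    rcases hε with rfl | rfl
    · apply hN1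
      ext i j
      have := congrFun (congrFun hn i) j
      fin_cases i <;> fin_cases j <;> simp_all
    · apply hN2
      ext i j
      have := congrFun (congrFun hn i) j
      fin_cases i <;> fin_cases j <;> simp_all
  have h' : (X : Matrix (Fin 2) (Fin 2) ℂ) * (N : Matrix (Fin 2) (Fin 2) ℂ)
      = (N : Matrix (Fin 2) (Fin 2) ℂ) * (X : Matrix (Fin 2) (Fin 2) ℂ) := by
    exact_mod_cast congrArg (fun M : SL2C => (M : Matrix (Fin 2) (Fin 2) ℂ)) h
  rw [hn] at h'
  have h00 := congrFun (congrFun h' 0) 0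
  have h01 := congrFun (congrFun h' 0) 1
  simp [Matrix.mul_apply, Fin.sum_univ_two] at h00 h01
  have hc : (X : Matrix (Fin 2) (Fin 2) ℂ) 1 0 = 0 := by
    have : ε * y * (X : Matrix (Fin 2) (Fin 2) ℂ) 1 0 = 0 := by linear_combination -h00
    exact (mul_eq_zero.mp this).resolve_left (mul_ne_zero hε0 hy)
  have hd : (X : Matrix (Fin 2) (Fin 2) ℂ) 0 0 = (X : Matrix (Fin 2) (Fin 2) ℂ) 1 1 := by
    have : ε * y * ((X : Matrix (Fin 2) (Fin 2) ℂ) 0 0 - (X : Matrix (Fin 2) (Fin 2) ℂ) 1 1) = 0 := by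
      linear_combination h01
    exact sub_eq_zero.mp ((mul_eq_zero.mp this).resolve_left (mul_ne_zero hε0 hy))
  exact form_of_entries X hc hd

/-- If `[A,B]·C₁·C₂ = Id` with `C₁, C₂` conjugate to `J₊`, and some `P ≠ ±Id` commutes with
`A, B, C₁, C₂`, then `[A,B] = Id`, `C₁ = C₂⁻¹`, and for any `Q` with `C₂ = Q·J₊·Q⁻¹`
one has `P, A, B ∈ Q·(U ∪ (−U))·Q⁻¹`. -/
theorem stmt3 (A B C₁ C₂ : SL2C)
    (h : ⁅A, B⁆ * C₁ * C₂ = 1)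
    (hC₁ : IsConj Jp C₁) (hC₂ : IsConj Jp C₂)
    (P : SL2C) (hP1 : P ≠ 1) (hP2 : P ≠ -1)
    (hPA : P * A = A * P) (hPB : P * B = B * P)
    (hPC₁ : P * C₁ = C₁ * P) (hPC₂ : P * C₂ = C₂ * P) :
    ⁅A, B⁆ = 1 ∧ C₁ = C₂⁻¹ ∧
    ∀ Q : SL2C, C₂ = Q * Jp * Q⁻¹ →
      ((∃ V ∈ Uset ∪ negUset, P = Q * V * Q⁻¹) ∧
       (∃ V ∈ Uset ∪ negUset, A = Q * V * Q⁻¹) ∧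
       (∃ V ∈ Uset ∪ negUset, B = Q * V * Q⁻¹)) := by
  -- key: for any Q with C₂ = Q Jp Q⁻¹, the conjugates of P, A, B are of PM form
  have key : ∀ Q : SL2C, C₂ = Q * Jp * Q⁻¹ →
      PMform (Q⁻¹ * P * Q) ∧ PMform (Q⁻¹ * A * Q) ∧ PMform (Q⁻¹ * B * Q) := by
    intro Q hQ
    have hJp : Jp = Q⁻¹ * C₂ * Q := by rw [hQ]; group
    have hP' : (Q⁻¹ * P * Q) * Jp = Jp * (Q⁻¹ * P * Q) := by
      rw [hJp]
      calc Q⁻¹ * P * Q * (Q⁻¹ * C₂ * Q) = Q⁻¹ * (P * C₂) * Q := by group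
        _ = Q⁻¹ * (C₂ * P) * Q := by rw [hPC₂]
        _ = Q⁻¹ * C₂ * Q * (Q⁻¹ * P * Q) := by group
    have hPform : PMform (Q⁻¹ * P * Q) := form_of_comm_Jp _ hP'
    have hPne1 : Q⁻¹ * P * Q ≠ 1 := by
      intro hh
      apply hP1
      have : P = Q * (Q⁻¹ * P * Q) * Q⁻¹ := by group
      rw [hh] at this
      simpa using this
    have hPne2 : Q⁻¹ * P * Q ≠ -1 := by
      intro hh
      apply hP2
      have : P = Q * (Q⁻¹ * P * Q) * Q⁻¹ := by group
      rw [hh] at this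
      simpa [mul_neg, neg_mul] using this
    have key2 : ∀ M : SL2C, P * M = M * P → PMform (Q⁻¹ * M * Q) := by
      intro M hM
      apply form_of_comm (Q⁻¹ * P * Q) _ hPform hPne1 hPne2
      calc Q⁻¹ * M * Q * (Q⁻¹ * P * Q) = Q⁻¹ * (M * P) * Q := by group
        _ = Q⁻¹ * (P * M) * Q := by rw [← hM]
        _ = Q⁻¹ * P * Q * (Q⁻¹ * M * Q) := by group
    exact ⟨hPform, key2 A hPA, key2 B hPB⟩
  -- get some Q₀
  obtain ⟨q, hq⟩ := isConj_iff.mp hC₂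
  have hQ₀ : C₂ = q * Jp * q⁻¹ := hq.symm
  obtain ⟨hPf, hAf, hBf⟩ := key q hQ₀
  have hcomm : A * B = B * A := by
    have h' : (q⁻¹ * A * q) * (q⁻¹ * B * q) = (q⁻¹ * B * q) * (q⁻¹ * A * q) :=
      form_comm _ _ hAf hBf
    have : q⁻¹ * (A * B) * q = q⁻¹ * (B * A) * q := by
      calc q⁻¹ * (A * B) * q = (q⁻¹ * A * q) * (q⁻¹ * B * q) := by group
        _ = (q⁻¹ * B * q) * (q⁻¹ * A * q) := h'
        _ = q⁻¹ * (B * A) * q := by group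
    have := congrArg (fun M => q * M * q⁻¹) this
    simpa [mul_assoc] using this
  have hcomm1 : ⁅A, B⁆ = 1 := by
    rw [commutatorElement_def]
    rw [hcomm]
    group
  refine ⟨hcomm1, ?_, ?_⟩
  · rw [hcomm1, one_mul] at h
    exact eq_inv_of_mul_eq_one_left h
  · intro Q hQ
    obtain ⟨hPf, hAf, hBf⟩ := key Q hQ
    refine ⟨⟨Q⁻¹ * P * Q, form_mem _ hPf, by group⟩,
            ⟨Q⁻¹ * A * Q, form_mem _ hAf, by group⟩,
            ⟨Q⁻¹ * B * Q, form_mem _ hBf, by group⟩⟩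
end

section
/- Let P ∈ SL(2,ℂ) have rows (x,y) and (z,w). (i) If z = 0 and x ≠ 1, x ≠ −1, then [P,J₊] is conjugate in SL(2,ℂ) to J₊. (ii) If z = 2i or z = −2i, then [P,J₊] is conjugate in SL(2,ℂ) to J₋. -/
open Matrix Complex
open scoped commutatorElement

def Jm : SL2C := ⟨!![-1, 1; 0, -1], by norm_num [Matrix.det_fin_two_of]⟩

/-- For `P ∈ SL(2,ℂ)` with rows `(x,y)`, `(z,w)`:
(i) if `z = 0` and `x ≠ ±1` then `[P,J₊] ∼ J₊`;
(ii) if `z = ±2i` then `[P,J₊] ∼ J₋`. -/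
theorem stmt10 (P : SL2C) (x y z w : ℂ)
    (hP : (P : Matrix (Fin 2) (Fin 2) ℂ) = !![x, y; z, w]) :
    (z = 0 → x ≠ 1 → x ≠ -1 → IsConj Jp ⁅P, Jp⁆) ∧
    ((z = 2 * I ∨ z = -(2 * I)) → IsConj Jm ⁅P, Jp⁆) := by
  have hdet : x * w - y * z = 1 := by
    have h := P.2
    rw [hP, Matrix.det_fin_two_of] at h
    linear_combination h
  have hPinv : ((P⁻¹ : SL2C) : Matrix (Fin 2) (Fin 2) ℂ) = !![w, -y; -z, x] := by
    rw [Matrix.SpecialLinearGroup.coe_inv, hP, Matrix.adjugate_fin_two_of]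
  have hJpinv : ((Jp⁻¹ : SL2C) : Matrix (Fin 2) (Fin 2) ℂ) = !![1, -1; 0, 1] := by
    rw [Matrix.SpecialLinearGroup.coe_inv]
    show adjugate !![1, 1; 0, 1] = _
    rw [Matrix.adjugate_fin_two_of]; norm_num
  have hcomm : ((⁅P, Jp⁆ : SL2C) : Matrix (Fin 2) (Fin 2) ℂ) =
      !![1 - x*z, x^2 + x*z - 1; -z^2, z^2 + 1 + x*z] := by
    rw [commutatorElement_def]
    simp only [Matrix.SpecialLinearGroup.coe_mul, hP, hPinv, hJpinv]
    show (!![x, y; z, w] * !![1, 1; 0, 1] * !![w, -y; -z, x] * !![1, -1; 0, 1]) = _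
    ext i j
    fin_cases i <;> fin_cases j <;>
      simp [Matrix.mul_fin_two] <;>
      first | ring1 | linear_combination hdet | linear_combination -hdet
  constructor
  · intro hz hx1 hx2
    obtain ⟨s, hs⟩ : ∃ s : ℂ, s ^ 2 = x ^ 2 - 1 :=
      IsAlgClosed.exists_pow_nat_eq (x ^ 2 - 1) zero_lt_two
    have hsne : s ≠ 0 := by
      intro h
      rw [h] at hs
      have h0 : (x - 1) * (x + 1) = 0 := by linear_combination -hs
      rcases mul_eq_zero.mp h0 with h | h
      · exact hx1 (by linear_combination h)
      · exact hx2 (by linear_combination h)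
    refine (isConj_iff).mpr ⟨@id SL2C ⟨!![s, 0; 0, s⁻¹], by
      simp [Matrix.det_fin_two_of, hsne]⟩, ?_⟩
    rw [mul_inv_eq_iff_eq_mul]
    apply Subtype.ext
    simp only [Matrix.SpecialLinearGroup.coe_mul, hcomm, hz]
    show !![s, 0; 0, s⁻¹] * !![1, 1; 0, 1] = _ * !![s, 0; 0, s⁻¹]
    ext i j
    fin_cases i <;> fin_cases j <;> simp [Matrix.mul_fin_two] <;>
      field_simp <;> linear_combination hs
  · intro hz
    have hz2 : z ^ 2 = -4 := by
      rcases hz with h | h <;> rw [h] <;> ring_nf <;>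
        simp [Complex.I_sq] <;> ring_nf
    have hzne : z ≠ 0 := by
      intro h; rw [h] at hz2; norm_num at hz2
    refine (isConj_iff).mpr ⟨@id SL2C ⟨!![(x*z-2)/z, -z⁻¹; z, 0], by
      simp [Matrix.det_fin_two_of, hzne]⟩, ?_⟩
    rw [mul_inv_eq_iff_eq_mul]
    apply Subtype.ext
    simp only [Matrix.SpecialLinearGroup.coe_mul, hcomm]
    show !![(x*z-2)/z, -z⁻¹; z, 0] * !![-1, 1; 0, -1] = _ * !![(x*z-2)/z, -z⁻¹; z, 0]
    ext i j
    fin_cases i <;> fin_cases j <;> simp [Matrix.mul_fin_two] <;>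
      field_simp <;> first | ring1 | linear_combination (1-x*z)*hz2 | linear_combination (-z^2)*hz2 | linear_combination -hz2
end

section
/- Let λ ∈ ℂ with λ ≠ 0, 1, −1, and let D be the diagonal matrix with diagonal entries λ⁻¹ and λ. Let A, B ∈ SL(2,ℂ) and let P ∈ SL(2,ℂ) have rows (x,y) and (z,w). Suppose [A,B]·[P,J₊] = D·J₊⁻¹. Then, writing [A,B] as the matrix with rows (a,b) and (c,d), one has a = λ⁻¹(1 + xz), b = −λ⁻¹x², c = λz², d = λ(1 − xz), and hence Tr([A,B]) = λ + λ⁻¹ − xz(λ − λ⁻¹). -/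
open Matrix
open scoped commutatorElement

/-- `D = diag(λ⁻¹, λ)` as an element of SL(2,ℂ), for `λ ≠ 0`. -/
noncomputable def Dmat (l : ℂ) (hl : l ≠ 0) : SL2C :=
  ⟨!![l⁻¹, 0; 0, l], by simp [Matrix.det_fin_two_of, inv_mul_cancel₀ hl]⟩

/-- If `[A,B]·[P,J₊] = D·J₊⁻¹` with `D = diag(λ⁻¹,λ)`, `λ ≠ 0,±1`, and `P` has rows
`(x,y),(z,w)`, then the entries `a,b,c,d` of `[A,B]` are
`a = λ⁻¹(1+xz)`, `b = −λ⁻¹x²`, `c = λz²`, `d = λ(1−xz)`, and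
`Tr([A,B]) = λ + λ⁻¹ − xz(λ − λ⁻¹)`. -/
theorem stmt11 (l : ℂ) (hl0 : l ≠ 0) (hl1 : l ≠ 1) (hl2 : l ≠ -1)
    (A B P : SL2C) (x y z w : ℂ)
    (hP : (P : Matrix (Fin 2) (Fin 2) ℂ) = !![x, y; z, w])
    (h : ⁅A, B⁆ * ⁅P, Jp⁆ = Dmat l hl0 * Jp⁻¹) :
    ((⁅A, B⁆ : SL2C) : Matrix (Fin 2) (Fin 2) ℂ) 0 0 = l⁻¹ * (1 + x * z) ∧
    ((⁅A, B⁆ : SL2C) : Matrix (Fin 2) (Fin 2) ℂ) 0 1 = -l⁻¹ * x ^ 2 ∧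
    ((⁅A, B⁆ : SL2C) : Matrix (Fin 2) (Fin 2) ℂ) 1 0 = l * z ^ 2 ∧
    ((⁅A, B⁆ : SL2C) : Matrix (Fin 2) (Fin 2) ℂ) 1 1 = l * (1 - x * z) ∧
    Matrix.trace ((⁅A, B⁆ : SL2C) : Matrix (Fin 2) (Fin 2) ℂ)
      = l + l⁻¹ - x * z * (l - l⁻¹) := by
  have hdet : x * w - y * z = 1 := by
    have := P.property
    rw [hP] at this
    simpa [Matrix.det_fin_two_of] using this
  have hAB : ⁅A, B⁆ = Dmat l hl0 * Jp⁻¹ * ⁅P, Jp⁆⁻¹ := by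
    rw [← h]; group
  have hM : ((⁅A, B⁆ : SL2C) : Matrix (Fin 2) (Fin 2) ℂ)
      = !![l⁻¹ * (1 + x * z), -l⁻¹ * x ^ 2; l * z ^ 2, l * (1 - x * z)] := by
    rw [hAB]
    simp only [commutatorElement_def, _root_.mul_inv_rev, inv_inv,
      Matrix.SpecialLinearGroup.coe_mul, Matrix.SpecialLinearGroup.coe_inv, hP,
      Matrix.adjugate_fin_two_of]
    simp only [Jp, Dmat, Matrix.SpecialLinearGroup.coe_mul, Matrix.SpecialLinearGroup.coe_inv, Matrix.adjugate_fin_two_of]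
    ext i j
    fin_cases i <;> fin_cases j <;>
      simp [Matrix.mul_apply, Fin.sum_univ_succ]
    all_goals
      first
      | ring1
      | linear_combination l⁻¹ * hdet
      | tauto
      | (left; ring1)
      | (left; linear_combination hdet)
  refine ⟨?_, ?_, ?_, ?_, ?_⟩ <;> simp [hM, Matrix.trace_fin_two_of] <;> ring
end

section
/- Let λ, μ ∈ ℂ with λ ≠ 0, 1, −1 and μ ≠ 0. Let a, b, c, d ∈ ℂ satisfy ad − bc = 1, bc ≠ 0, and (aμ⁻¹ − 1) + λ²(dμ − 1) = 0. Then a quadruple (x,y,z,w) ∈ ℂ⁴ satisfies the five equations xw − λ⁻²yz = dμ, xy(1 − λ²) = −bμ⁻¹, zw(1 − λ⁻²) = −cμ, xw − λ²yz = aμ⁻¹, xw − yz = 1 if and only if x ≠ 0, y = −μ⁻¹b/(x(1 − λ²)), z = (μ − a)x/b, and w = (μ⁻¹a − λ²)/((1 − λ²)x). In particular the solution set is in bijection with ℂ* via (x,y,z,w) ↦ x. -/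
/-- (Generic fibre of Theorem 5.4(1).) With `λ ≠ 0,±1`, `μ ≠ 0`, `ad − bc = 1`, `bc ≠ 0`
and the trace relation, the solutions `(x,y,z,w)` of the five equations are exactly those
with `x ≠ 0` and `y, z, w` given by the stated formulas; hence the solution set is in
bijection with `ℂ*` via `(x,y,z,w) ↦ x`. -/
theorem stmt16 (l m : ℂ) (hl0 : l ≠ 0) (hl1 : l ≠ 1) (hl2 : l ≠ -1) (hm : m ≠ 0)
    (a b c d : ℂ)
    (hdet : a * d - b * c = 1)
    (hbc : b * c ≠ 0)
    (htr : (a * m⁻¹ - 1) + l ^ 2 * (d * m - 1) = 0) :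
    (∀ x y z w : ℂ,
      ((x * w - (l ^ 2)⁻¹ * y * z = d * m ∧
        x * y * (1 - l ^ 2) = -b * m⁻¹ ∧
        z * w * (1 - (l ^ 2)⁻¹) = -c * m ∧
        x * w - l ^ 2 * y * z = a * m⁻¹ ∧
        x * w - y * z = 1) ↔
       (x ≠ 0 ∧ y = -m⁻¹ * b / (x * (1 - l ^ 2)) ∧
        z = (m - a) * x / b ∧
        w = (m⁻¹ * a - l ^ 2) / ((1 - l ^ 2) * x)))) ∧
    ∃ e : {p : ℂ × ℂ × ℂ × ℂ //
            p.1 * p.2.2.2 - (l ^ 2)⁻¹ * p.2.1 * p.2.2.1 = d * m ∧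
            p.1 * p.2.1 * (1 - l ^ 2) = -b * m⁻¹ ∧
            p.2.2.1 * p.2.2.2 * (1 - (l ^ 2)⁻¹) = -c * m ∧
            p.1 * p.2.2.2 - l ^ 2 * p.2.1 * p.2.2.1 = a * m⁻¹ ∧
            p.1 * p.2.2.2 - p.2.1 * p.2.2.1 = 1} ≃ ℂˣ,
      ∀ p, (e p : ℂ) = p.1.1 := by
  have hb : b ≠ 0 := fun h => hbc (by simp [h])
  have hc : c ≠ 0 := fun h => hbc (by simp [h])
  have hl2' : l ^ 2 ≠ 0 := pow_ne_zero _ hl0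
  have hml : (1 : ℂ) - l ^ 2 ≠ 0 := by
    intro h
    have h2 : (1 - l) * (1 + l) = 0 := by linear_combination h
    rcases mul_eq_zero.1 h2 with h3 | h3
    · exact hl1 (by linear_combination -h3)
    · exact hl2 (by linear_combination h3)
  have htr' : a + l ^ 2 * d * m ^ 2 = m + l ^ 2 * m := by
    field_simp at htr
    linear_combination htr
  have key : ∀ x y z w : ℂ,
      ((x * w - (l ^ 2)⁻¹ * y * z = d * m ∧
        x * y * (1 - l ^ 2) = -b * m⁻¹ ∧
        z * w * (1 - (l ^ 2)⁻¹) = -c * m ∧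
        x * w - l ^ 2 * y * z = a * m⁻¹ ∧
        x * w - y * z = 1) ↔
       (x ≠ 0 ∧ y = -m⁻¹ * b / (x * (1 - l ^ 2)) ∧
        z = (m - a) * x / b ∧
        w = (m⁻¹ * a - l ^ 2) / ((1 - l ^ 2) * x))) := by
    intro x y z w
    constructor
    · rintro ⟨e1, e2, e3, e4, e5⟩
      field_simp at e2 e4
      have hx : x ≠ 0 := by
        intro h
        rw [h] at e2
        simp [eq_comm] at e2
        exact hb e2
      refine ⟨hx, ?_, ?_, ?_⟩
      · field_simp
        linear_combination e2
      · field_simp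
        linear_combination z * e2 - x * e4 + x * m * e5
      · field_simp
        linear_combination e4 - m * l ^ 2 * e5
    · rintro ⟨hx, hy, hz, hw⟩
      have hy' : y * (x * (1 - l ^ 2)) * m = -b := by
        rw [hy]; field_simp
      have hz' : z * b = (m - a) * x := by
        rw [hz]; field_simp
      have hw' : w * ((1 - l ^ 2) * x) * m = a - l ^ 2 * m := by
        rw [hw]; field_simp
      have hX : x * b * (1 - l ^ 2) * m ≠ 0 :=
        mul_ne_zero (mul_ne_zero (mul_ne_zero hx hb) hml) hm
      have h5 : x * w - y * z = 1 := by
        have h5m : (x * w - y * z) * (x * b * (1 - l ^ 2) * m)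
            = 1 * (x * b * (1 - l ^ 2) * m) := by
          linear_combination x * b * hw' - z * b * hy' + b * hz'
        exact mul_right_cancel₀ hX h5m
      have h4 : (x * w - l ^ 2 * y * z) * m = a := by
        have h4m : ((x * w - l ^ 2 * y * z) * m) * (x * b * (1 - l ^ 2))
            = a * (x * b * (1 - l ^ 2)) := by
          linear_combination x * b * hw' - l ^ 2 * z * b * hy' + l ^ 2 * b * hz'
        exact mul_right_cancel₀ (mul_ne_zero (mul_ne_zero hx hb) hml) h4m
      have h1 : x * w * l ^ 2 - y * z = d * m * l ^ 2 := by
        have h1m : (x * w * l ^ 2 - y * z) * (x * b * (1 - l ^ 2) * m)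
            = (d * m * l ^ 2) * (x * b * (1 - l ^ 2) * m) := by
          linear_combination l ^ 2 * x * b * hw' - z * b * hy' + b * hz' +
            x * b * (l ^ 2 - 1) * htr'
        exact mul_right_cancel₀ hX h1m
      have h3 : z * w * (l ^ 2 - 1) = -c * m * l ^ 2 := by
        have h3m : (z * w * (l ^ 2 - 1)) * (x * b * (1 - l ^ 2) * m)
            = (-c * m * l ^ 2) * (x * b * (1 - l ^ 2) * m) := by
          linear_combination (-(1 - l ^ 2) * z * b) * hw' +
            (-(1 - l ^ 2) * (a - l ^ 2 * m)) * hz' +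
            ((1 - l ^ 2) * x * a) * htr' + (-(1 - l ^ 2) * x * l ^ 2 * m ^ 2) * hdet
        exact mul_right_cancel₀ hX h3m
      refine ⟨?_, ?_, ?_, ?_, h5⟩
      · field_simp
        linear_combination h1
      · field_simp
        linear_combination hy'
      · field_simp
        linear_combination h3
      · field_simp
        linear_combination h4
  refine ⟨key, ?_⟩
  refine ⟨{ toFun := fun p => Units.mk0 p.1.1 ((key p.1.1 p.1.2.1 p.1.2.2.1 p.1.2.2.2).1 p.2).1
            invFun := fun u => ⟨(u, -m⁻¹ * b / ((u : ℂ) * (1 - l ^ 2)),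
                (m - a) * (u : ℂ) / b, (m⁻¹ * a - l ^ 2) / ((1 - l ^ 2) * (u : ℂ))),
                (key _ _ _ _).2 ⟨u.ne_zero, rfl, rfl, rfl⟩⟩
            left_inv := ?_
            right_inv := ?_ }, fun p => rfl⟩
  · rintro ⟨⟨x, y, z, w⟩, hp⟩
    obtain ⟨hx, hy, hz, hw⟩ := (key x y z w).1 hp
    exact Subtype.ext (by simp [hy, hz, hw, Prod.ext_iff])
  · intro u
    exact Units.ext rfl
end

section
/- Let λ, μ ∈ ℂ with λ ≠ 0, 1, −1 and μ ≠ 0. Let a, b, c, d ∈ ℂ with a = μ, d = μ⁻¹, and bc = 0. Then a quadruple (x,y,z,w) ∈ ℂ⁴ satisfies the five equations xw − λ⁻²yz = dμ, xy(1 − λ²) = −bμ⁻¹, zw(1 − λ⁻²) = −cμ, xw − λ²yz = aμ⁻¹, xw − yz = 1 if and only if x ≠ 0, w = x⁻¹, y = −bμ⁻¹/(x(1 − λ²)), and z = −cμx/(1 − λ⁻²). -/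
/-- (Case `t₂ = 2` of Theorem 5.4.) With `λ ≠ 0,±1`, `μ ≠ 0`, `a = μ`, `d = μ⁻¹`, `bc = 0`,
the solutions `(x,y,z,w)` of the five equations are exactly those with `x ≠ 0`, `w = x⁻¹`,
and `y, z` given by the stated formulas. -/
theorem stmt17 (l m : ℂ) (hl0 : l ≠ 0) (hl1 : l ≠ 1) (hl2 : l ≠ -1) (hm : m ≠ 0)
    (a b c d : ℂ)
    (ha : a = m) (hd : d = m⁻¹) (hbc : b * c = 0) :
    ∀ x y z w : ℂ,
      ((x * w - (l ^ 2)⁻¹ * y * z = d * m ∧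
        x * y * (1 - l ^ 2) = -b * m⁻¹ ∧
        z * w * (1 - (l ^ 2)⁻¹) = -c * m ∧
        x * w - l ^ 2 * y * z = a * m⁻¹ ∧
        x * w - y * z = 1) ↔
       (x ≠ 0 ∧ w = x⁻¹ ∧
        y = -b * m⁻¹ / (x * (1 - l ^ 2)) ∧
        z = -c * m * x / (1 - (l ^ 2)⁻¹))) := by
  have hsq : l ^ 2 ≠ 1 := by
    intro h
    have h' : (l - 1) * (l + 1) = 0 := by linear_combination h
    rcases mul_eq_zero.mp h' with h'' | h''
    · exact hl1 (by linear_combination h'')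
    · exact hl2 (by linear_combination h'')
  have hA : (1 : ℂ) - l ^ 2 ≠ 0 := fun h => hsq (by linear_combination -h)
  have hsq0 : (l : ℂ) ^ 2 ≠ 0 := pow_ne_zero _ hl0
  have hB : (1 : ℂ) - (l ^ 2)⁻¹ ≠ 0 := by
    intro h
    have : (l ^ 2)⁻¹ = 1 := by linear_combination -h
    exact hsq (by rw [← inv_eq_one]; exact this)
  intro x y z w
  rw [ha, hd, inv_mul_cancel₀ hm, mul_inv_cancel₀ hm]
  constructor
  · rintro ⟨e1, e2, e3, e4, e5⟩
    have hyz : y * z = 0 := by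
      have h : (1 - (l ^ 2)⁻¹) * (y * z) = 0 := by linear_combination e1 - e5
      exact (mul_eq_zero.mp h).resolve_left hB
    have hxw : x * w = 1 := by linear_combination e5 + hyz
    have hx : x ≠ 0 := left_ne_zero_of_mul_eq_one hxw
    refine ⟨hx, ?_, ?_, ?_⟩
    · field_simp
      linear_combination hxw
    · rw [eq_div_iff (mul_ne_zero hx hA)]
      linear_combination e2
    · rw [eq_div_iff hB]
      linear_combination x * e3 - z * (1 - (l ^ 2)⁻¹) * hxw
  · rintro ⟨hx, hw, hy, hz⟩
    subst hw hy hz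
    have hC : (l : ℂ) ^ 2 - 1 ≠ 0 := sub_ne_zero.mpr hsq
    refine ⟨?_, ?_, ?_, ?_, ?_⟩ <;> field_simp
    · linear_combination (-1 : ℂ) * hbc
    · linear_combination (-l ^ 4) * hbc
    · linear_combination (-l ^ 2) * hbc
end

section
/- Let λ, μ ∈ ℂ with λ ≠ 0, 1, −1 and μ ≠ 0. Let a, b, c, d ∈ ℂ with a = μλ², d = μ⁻¹λ⁻², and bc = 0. Then a quadruple (x,y,z,w) ∈ ℂ⁴ satisfies the five equations xw − λ⁻²yz = dμ, xy(1 − λ²) = −bμ⁻¹, zw(1 − λ⁻²) = −cμ, xw − λ²yz = aμ⁻¹, xw − yz = 1 if and only if y ≠ 0, z = −1/y, x = −bμ⁻¹/(y(1 − λ²)), and w = cμy/(1 − λ⁻²). -/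
/-- (Case `t₂ = λ² + λ⁻²` of Theorem 5.4.) With `λ ≠ 0,±1`, `μ ≠ 0`, `a = μλ²`,
`d = μ⁻¹λ⁻²`, `bc = 0`, the solutions `(x,y,z,w)` of the five equations are exactly those
with `y ≠ 0`, `z = −1/y`, and `x, w` given by the stated formulas. -/
theorem stmt18 (l m : ℂ) (hl0 : l ≠ 0) (hl1 : l ≠ 1) (hl2 : l ≠ -1) (hm : m ≠ 0)
    (a b c d : ℂ)
    (ha : a = m * l ^ 2) (hd : d = m⁻¹ * (l ^ 2)⁻¹) (hbc : b * c = 0) :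
    ∀ x y z w : ℂ,
      ((x * w - (l ^ 2)⁻¹ * y * z = d * m ∧
        x * y * (1 - l ^ 2) = -b * m⁻¹ ∧
        z * w * (1 - (l ^ 2)⁻¹) = -c * m ∧
        x * w - l ^ 2 * y * z = a * m⁻¹ ∧
        x * w - y * z = 1) ↔
       (y ≠ 0 ∧ z = -1 / y ∧
        x = -b * m⁻¹ / (y * (1 - l ^ 2)) ∧
        w = c * m * y / (1 - (l ^ 2)⁻¹))) := by
  have hl2n : l ^ 2 ≠ 0 := pow_ne_zero 2 hl0
  have h1 : 1 - l ^ 2 ≠ 0 := by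
    intro h
    have h' : (l - 1) * (l + 1) = 0 := by linear_combination -h
    rcases mul_eq_zero.mp h' with h'' | h''
    · exact hl1 (by linear_combination h'')
    · exact hl2 (by linear_combination h'')
  have h2 : 1 - (l ^ 2)⁻¹ ≠ 0 := by
    intro h
    apply h1
    have h3 : (l ^ 2)⁻¹ = 1 := by linear_combination -h
    have h4 : l ^ 2 = 1 := by rw [← inv_eq_one]; exact h3
    linear_combination -h4
  have hm' : m⁻¹ * m = 1 := inv_mul_cancel₀ hm
  intro x y z w
  constructor
  · rintro ⟨e1, e2, e3, e4, e5⟩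
    have hdm : d * m = (l ^ 2)⁻¹ := by rw [hd]; field_simp
    have hyz : y * z = -1 := by
      have key : (1 - (l ^ 2)⁻¹) * (y * z) = (1 - (l ^ 2)⁻¹) * (-1) := by
        linear_combination e1 - e5 + hdm
      exact mul_left_cancel₀ h2 key
    have hy : y ≠ 0 := by
      rintro rfl; simp at hyz
    refine ⟨hy, ?_, ?_, ?_⟩
    · field_simp
      linear_combination hyz
    · rw [eq_div_iff (mul_ne_zero hy h1)]
      linear_combination e2
    · have hz : z ≠ 0 := by
        rintro rfl; simp at hyz
      rw [eq_div_iff h2]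
      have key : w * (1 - (l ^ 2)⁻¹) * z = c * m * y * z := by
        linear_combination e3 - c * m * hyz
      exact mul_right_cancel₀ hz key
  · rintro ⟨hy, hz, hx, hw⟩
    have hxw : x * w = 0 := by
      rw [hx, hw, div_mul_div_comm, div_eq_zero_iff]
      left
      linear_combination (-(m⁻¹ * m * y)) * hbc
    have hyz : y * z = -1 := by rw [hz]; field_simp
    refine ⟨?_, ?_, ?_, ?_, ?_⟩
    · rw [hd]
      linear_combination hxw - (l ^ 2)⁻¹ * hyz - (l ^ 2)⁻¹ * hm'
    · rw [hx]; field_simp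
    · rw [hz, hw, div_mul_div_comm, div_mul_eq_mul_div,
        div_eq_iff (mul_ne_zero hy h2)]
      ring
    · rw [ha]
      linear_combination hxw - l ^ 2 * hyz - l ^ 2 * hm'
    · linear_combination hxw - hyz
end
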